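/- For λ > 0 and ε ∈ (0,1), the continuous maximizer x* of g(x) = e^{−xλ}((1−e^{−λ})x + e^{−λ}((1−ε)/(1−εe^{−λ}))(1−(εe^{−λ})^x)) over x ≥ 0 satisfies x* < 1/λ + A, where A = ((1−ε)/(1−εe^{−λ})) e^{−λ}/(1−e^{−λ}). -/

import Mathlib

/-- Any maximizer x* ≥ 0 of the continuous relaxation g satisfies x* < 1/λ + A. -/
theorem g_maximizer_bound (lam ε : ℝ) (hlam : 0 < lam) (hε0 : 0 < ε) (hε1 : ε < 1)
    (xs : ℝ) (hxs : 0 ≤ xs)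
    (hmax : IsMaxOn (fun x : ℝ => Real.exp (-x * lam) *
        ((1 - Real.exp (-lam)) * x +
          Real.exp (-lam) * ((1 - ε) / (1 - ε * Real.exp (-lam))) *
            (1 - (ε * Real.exp (-lam)) ^ x)))
      (Set.Ici 0) xs) :
    xs < 1 / lam + (1 - ε) / (1 - ε * Real.exp (-lam)) *
      (Real.exp (-lam) / (1 - Real.exp (-lam))) := by
  set c : ℝ := 1 - Real.exp (-lam) with hc_def
  set a : ℝ := Real.exp (-lam) * ((1 - ε) / (1 - ε * Real.exp (-lam))) with ha_def
  have hexplt : Real.exp (-lam) < 1 := Real.exp_lt_one_iff.mpr (by linarith)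
  have hexppos : (0:ℝ) < Real.exp (-lam) := Real.exp_pos _
  have hc : 0 < c := by simp [hc_def]; linarith
  have hq : 0 < ε * Real.exp (-lam) := mul_pos hε0 hexppos
  have hq1 : ε * Real.exp (-lam) < 1 := by nlinarith
  have ha : 0 < a := by
    apply mul_pos hexppos
    apply div_pos (by linarith) (by linarith)
  have hA : 0 < (1 - ε) / (1 - ε * Real.exp (-lam)) *
      (Real.exp (-lam) / (1 - Real.exp (-lam))) := by
    apply mul_pos (div_pos (by linarith) (by linarith)) (div_pos hexppos (by linarith))
  -- A = a / c
  have hAac : (1 - ε) / (1 - ε * Real.exp (-lam)) *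
      (Real.exp (-lam) / (1 - Real.exp (-lam))) = a / c := by
    rw [ha_def, hc_def]; ring
  by_cases hcase : xs < 1 / lam
  · linarith
  push_neg at hcase
  have hxs0 : 0 < xs := lt_of_lt_of_le (by positivity) hcase
  set L : ℝ := Real.log (ε * Real.exp (-lam)) with hL_def
  have hL : L < 0 := Real.log_neg hq hq1
  -- rewrite the function
  have hfun : (fun x : ℝ => Real.exp (-x * lam) *
        ((1 - Real.exp (-lam)) * x +
          Real.exp (-lam) * ((1 - ε) / (1 - ε * Real.exp (-lam))) *
            (1 - (ε * Real.exp (-lam)) ^ x))) =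
      (fun x : ℝ => Real.exp (-x * lam) * (c * x + a * (1 - Real.exp (L * x)))) := by
    funext x
    rw [Real.rpow_def_of_pos hq]
  rw [hfun] at hmax
  -- derivative
  set E : ℝ := Real.exp (L * xs) with hE_def
  have hd : HasDerivAt (fun x : ℝ => Real.exp (-x * lam) * (c * x + a * (1 - Real.exp (L * x))))
      (Real.exp (-xs * lam) * (-1 * lam) * (c * xs + a * (1 - E)) +
        Real.exp (-xs * lam) * (c * 1 + a * (0 - Real.exp (L * xs) * L))) xs := by
    have h1 : HasDerivAt (fun x : ℝ => Real.exp (-x * lam)) (Real.exp (-xs * lam) * (-1 * lam)) xs :=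
      (((hasDerivAt_id xs).neg).mul_const lam).exp
    have h3 : HasDerivAt (fun x : ℝ => Real.exp (L * x)) (Real.exp (L * xs) * L) xs := by
      have := ((hasDerivAt_id xs).const_mul L).exp
      simpa using this
    have h2 : HasDerivAt (fun x : ℝ => c * x + a * (1 - Real.exp (L * x)))
        (c * 1 + a * (0 - Real.exp (L * xs) * L)) xs :=
      ((hasDerivAt_id xs).const_mul c).add (((hasDerivAt_const xs (1:ℝ)).sub h3).const_mul a)
    exact h1.mul h2
  -- local max gives deriv zero
  have hloc : IsLocalMax (fun x : ℝ => Real.exp (-x * lam) * (c * x + a * (1 - Real.exp (L * x)))) xs :=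
    hmax.isLocalMax (Ici_mem_nhds hxs0)
  have hder0 := hloc.deriv_eq_zero
  rw [hd.deriv] at hder0
  -- extract critical point equation
  have hkey : lam * (c * xs + a * (1 - E)) = c - a * L * E := by
    have hne : Real.exp (-xs * lam) ≠ 0 := (Real.exp_pos _).ne'
    rw [← hE_def] at hder0
    refine mul_left_cancel₀ hne ?_
    linear_combination -hder0
  -- bound E
  have hEpos : 0 < E := Real.exp_pos _
  have hEle : E ≤ Real.exp (L / lam) := by
    apply Real.exp_le_exp.mpr
    calc L * xs ≤ L * (1 / lam) := mul_le_mul_of_nonpos_left hcase hL.le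
      _ = L / lam := by ring
  have hkey2 : Real.exp (L / lam) * (lam - L) ≤ lam := by
    have h1 : 1 + (-L / lam) ≤ Real.exp (-L / lam) := by
      have := Real.add_one_le_exp (-L / lam)
      linarith
    have h2 : Real.exp (L / lam) * Real.exp (-L / lam) = 1 := by
      rw [← Real.exp_add]
      have : L / lam + -L / lam = 0 := by ring
      rw [this, Real.exp_zero]
    have h3 : 0 < Real.exp (L / lam) := Real.exp_pos _
    have h1' : lam * (1 + -L / lam) = lam - L := by field_simp; ring
    have h1'' : lam - L ≤ lam * Real.exp (-L / lam) := by
      rw [← h1']; exact mul_le_mul_of_nonneg_left h1 hlam.le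
    nlinarith [mul_le_mul_of_nonneg_left h1'' h3.le, h2, hlam, h3]
  -- conclude
  have hfin : xs ≤ 1 / lam := by
    have hcmp : a * (E * (lam - L)) ≤ a * lam := by
      apply mul_le_mul_of_nonneg_left _ ha.le
      calc E * (lam - L) ≤ Real.exp (L / lam) * (lam - L) := by
            apply mul_le_mul_of_nonneg_right hEle (by linarith)
        _ ≤ lam := hkey2
    have h5 : lam * c * xs ≤ c := by nlinarith
    rw [le_div_iff₀ hlam]
    nlinarith [h5, hc]
  rw [hAac]
  have : 0 < a / c := div_pos ha hc
  linarith
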